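/- Suppose the n-bit equality function admits a representation EQ(x,y) = P(A(x), B(y)) where A, B : {0,1}^n → F_2^m and P is an F_2-polynomial of total degree d on 2m variables, with n ≤ m. Then Σ_{i=0}^{d} C(m,i) ≥ 2^n − 1, and consequently d ≥ n / log₂(m+1). -/

import Mathlib

lemma zmod2_pow (a : ZMod 2) {e : ℕ} (he : e ≠ 0) : a ^ e = a := by
  induction e with
  | zero => simp at he
  | succ k ih =>
    rcases Nat.eq_zero_or_pos k with hk | hk
    · simp [hk]
    · rw [pow_succ, ih hk.ne']
      clear ih he; revert a; decide

lemma prod_sum_split {α β M : Type*} [CommMonoid M] (s : Finset (α ⊕ β)) (g : α ⊕ β → M) :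
    ∏ i ∈ s, g i = (∏ i ∈ s.toLeft, g (Sum.inl i)) * ∏ j ∈ s.toRight, g (Sum.inr j) := by
  rw [← Finset.prod_disjSum, Finset.toLeft_disjSum_toRight]

lemma sum_choose_le (m d : ℕ) :
    ∑ i ∈ Finset.range (d + 1), m.choose i ≤ (m + 1) ^ d := by
  induction d with
  | zero => simp
  | succ k ih =>
    rw [Finset.sum_range_succ]
    have h1 : m.choose (k + 1) ≤ m ^ (k + 1) := Nat.choose_le_pow _ _
    have h2 : m ^ (k + 1) ≤ m * (m + 1) ^ k := by
      rw [pow_succ']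
      exact Nat.mul_le_mul_left _ (Nat.pow_le_pow_left (Nat.le_succ m) k)
    have h3 : (m + 1) ^ (k + 1) = (m + 1) ^ k + m * (m + 1) ^ k := by ring
    omega

/-- If `EQ(x,y) = P(A(x), B(y))` where `A,B : {0,1}^n → F_2^m` and `P`
is an `F_2`-polynomial of total degree at most `d` on `2m` variables, with `n ≤ m`,
then `Σ_{i=0}^{d} C(m,i) ≥ 2^n − 1`, and consequently `d ≥ n / log₂(m+1)`. -/
theorem stmt1 (n m d : ℕ) (hn : 1 ≤ n) (hnm : n ≤ m)
    (A B : (Fin n → Bool) → Fin m → ZMod 2)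
    (P : MvPolynomial (Fin m ⊕ Fin m) (ZMod 2))
    (hdeg : P.totalDegree ≤ d)
    (h : ∀ x y : Fin n → Bool,
      MvPolynomial.eval (Sum.elim (A x) (B y)) P = (if x = y then 1 else 0)) :
    2 ^ n - 1 ≤ ∑ i ∈ Finset.range (d + 1), m.choose i ∧
      (n : ℝ) / Real.logb 2 (m + 1) ≤ (d : ℝ) := by
  classical
  set T : Finset (Finset (Fin m)) := Finset.univ.filter (fun S => S.card ≤ d) with hT
  -- the "fiber" map μ ↦ left support lands in T
  have hmaps : ∀ μ ∈ P.support, μ.support.toLeft ∈ T := by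
    intro μ hμ
    have h1 : μ.support.toLeft.card ≤ μ.support.card := Finset.card_toLeft_le
    have h2 : μ.support.card ≤ μ.sum fun _ e => e := by
      rw [Finset.card_eq_sum_ones, Finsupp.sum]
      exact Finset.sum_le_sum fun i hi =>
        Nat.one_le_iff_ne_zero.mpr (Finsupp.mem_support_iff.mp hi)
    have h3 : (μ.sum fun _ e => e) ≤ P.totalDegree := MvPolynomial.le_totalDegree hμ
    simp only [hT, Finset.mem_filter, Finset.mem_univ, true_and]
    omega
  -- the matrices
  set U : Matrix (Fin n → Bool) {S // S ∈ T} (ZMod 2) :=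
    fun x S => ∏ i ∈ S.1, A x i with hU
  set V : Matrix {S // S ∈ T} (Fin n → Bool) (ZMod 2) :=
    fun S y => ∑ μ ∈ P.support.filter (fun μ => μ.support.toLeft = S.1),
      P.coeff μ * ∏ j ∈ μ.support.toRight, B y j with hV
  have hUV : U * V = 1 := by
    ext x y
    rw [Matrix.mul_apply, Matrix.one_apply, ← h x y, MvPolynomial.eval_eq]
    have e1 : ∑ S : {S // S ∈ T}, U x S * V S y
        = ∑ S ∈ T, ∑ μ ∈ P.support.filter (fun μ => μ.support.toLeft = S),
            P.coeff μ * ∏ i ∈ μ.support, Sum.elim (A x) (B y) i ^ μ i := by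
      rw [← Finset.sum_coe_sort T (fun S =>
        ∑ μ ∈ P.support.filter (fun μ => μ.support.toLeft = S),
          P.coeff μ * ∏ i ∈ μ.support, Sum.elim (A x) (B y) i ^ μ i)]
      refine Finset.sum_congr rfl fun S _ => ?_
      rw [hU, hV, Finset.mul_sum]
      refine Finset.sum_congr rfl fun μ hμ => ?_
      obtain ⟨hμP, hμS⟩ := Finset.mem_filter.mp hμ
      have hprod : ∏ i ∈ μ.support, Sum.elim (A x) (B y) i ^ μ i
          = (∏ i ∈ μ.support.toLeft, A x i) * ∏ j ∈ μ.support.toRight, B y j := by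
        rw [prod_sum_split]
        congr 1
        · refine Finset.prod_congr rfl fun i hi => ?_
          have : μ (Sum.inl i) ≠ 0 :=
            Finsupp.mem_support_iff.mp (Finset.mem_toLeft.mp hi)
          simp [zmod2_pow _ this]
        · refine Finset.prod_congr rfl fun j hj => ?_
          have : μ (Sum.inr j) ≠ 0 :=
            Finsupp.mem_support_iff.mp (Finset.mem_toRight.mp hj)
          simp [zmod2_pow _ this]
      dsimp only
      rw [← hμS, hprod]
      ring
    rw [e1, Finset.sum_fiberwise_of_maps_to hmaps]
  -- rank bound : 2^n ≤ T.card
  have hcard : Fintype.card (Fin n → Bool) = 2 ^ n := by simp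
  have hrank : 2 ^ n ≤ T.card := by
    have c1 : (2 : ℕ) ^ n
        = Matrix.rank (1 : Matrix (Fin n → Bool) (Fin n → Bool) (ZMod 2)) := by
      rw [Matrix.rank_one, hcard]
    have c2 : Matrix.rank (U * V) ≤ Fintype.card {S // S ∈ T} :=
      le_trans (Matrix.rank_mul_le_left U V) (Matrix.rank_le_card_width U)
    rw [hUV] at c2
    rw [Fintype.card_coe] at c2
    omega
  -- T.card = ∑ choose
  have hTcard : T.card = ∑ i ∈ Finset.range (d + 1), m.choose i := by
    have hTb : T = (Finset.range (d + 1)).biUnion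
        (fun i => Finset.powersetCard i (Finset.univ : Finset (Fin m))) := by
      ext S
      simp only [hT, Finset.mem_filter, Finset.mem_univ, true_and, Finset.mem_biUnion,
        Finset.mem_range, Finset.mem_powersetCard, Finset.subset_univ, true_and]
      constructor
      · intro hS; exact ⟨S.card, by omega, rfl⟩
      · rintro ⟨i, hi, rfl⟩; omega
    rw [hTb, Finset.card_biUnion]
    · refine Finset.sum_congr rfl fun i _ => ?_
      rw [Finset.card_powersetCard, Finset.card_univ, Fintype.card_fin]
    · intro i _ j _ hij
      simp only [Finset.disjoint_left, Finset.mem_powersetCard]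
      rintro S ⟨-, h1⟩ ⟨-, h2⟩
      exact hij (h1 ▸ h2 ▸ rfl)
  have hmain : 2 ^ n ≤ ∑ i ∈ Finset.range (d + 1), m.choose i := hTcard ▸ hrank
  constructor
  · omega
  · -- real arithmetic
    have hpow : (2 : ℕ) ^ n ≤ (m + 1) ^ d := le_trans hmain (sum_choose_le m d)
    have hm1 : (1 : ℝ) < (m : ℝ) + 1 := by
      have : (1 : ℕ) ≤ m := le_trans hn hnm
      have : (1 : ℝ) ≤ (m : ℝ) := by exact_mod_cast this
      linarith
    have hlb : 0 < Real.logb 2 ((m : ℝ) + 1) := Real.logb_pos one_lt_two hm1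
    have hmcast : ((m : ℝ) + 1) = ((m + 1 : ℕ) : ℝ) := by push_cast; ring
    rw [div_le_iff₀ hlb]
    have hpr : (2 : ℝ) ^ n ≤ ((m : ℝ) + 1) ^ d := by
      rw [hmcast]; exact_mod_cast hpow
    have h2n : Real.logb 2 ((2 : ℝ) ^ n) = (n : ℝ) := by
      rw [Real.logb_pow, Real.logb_self_eq_one one_lt_two]; ring
    have hmd : Real.logb 2 (((m : ℝ) + 1) ^ d) = (d : ℝ) * Real.logb 2 ((m : ℝ) + 1) :=
      Real.logb_pow 2 _ d
    have := Real.logb_le_logb_of_le one_lt_two (by positivity) hpr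
    rw [h2n, hmd] at this
    exact this
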